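/- Let α, β be weak compositions of n and M a k × l nonnegative-integer matrix of type (α, β). Over F_q (set t = 1/q), the number of triples (F, F', N) where F is a partial flag of type α, F' a partial flag of type β, (F, F') has relative position M, and N is a nilpotent endomorphism strictly compatible with both F and F', equals t^{−n² + n + n(α) + n(β)} · [n]_t! / ∏_{i,j} [M_{i,j}]_t!, where n(γ) = Σ_i binomial(γ_i, 2). -/

import Mathlib

/-- The `t`-factorial `[m]_t!`. -/
def qFac (t : ℚ) (m : ℕ) : ℚ := ∏ j ∈ Finset.range m, ∑ i ∈ Finset.range (j + 1), t ^ i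

namespace Stmt19Aux
open Finset Submodule Module

section PartA
variable {F : Type*} [Field F]

/-- For a linearly independent family, span of image intersect span of image is span of
image of intersection. -/
theorem span_image_inf {ι V : Type*} [AddCommGroup V] [Module F V]
    {v : ι → V} (hv : LinearIndependent F v) (s t : Set ι) :
    Submodule.span F (v '' s) ⊓ Submodule.span F (v '' t)
      = Submodule.span F (v '' (s ∩ t)) := by
  have hd : Submodule.span F (v '' t) ⊓ Submodule.span F (v '' (s \ t)) = ⊥ := by
    refine disjoint_iff.mp (hv.disjoint_span_image ?_)
    exact Set.disjoint_sdiff_right.mono_left le_rfl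
  have hsplit : Submodule.span F (v '' s)
      = Submodule.span F (v '' (s \ t)) ⊔ Submodule.span F (v '' (s ∩ t)) := by
    rw [← Submodule.span_union, ← Set.image_union]
    congr 1
    rw [Set.diff_union_inter]
  rw [hsplit, inf_comm,
    ← inf_sup_assoc_of_le _ (Submodule.span_mono (Set.image_mono Set.inter_subset_right)), hd,
    bot_sup_eq]

theorem mem_span_image_inter {ι V : Type*} [AddCommGroup V] [Module F V]
    {v : ι → V} (hv : LinearIndependent F v) {s t : Set ι} {x : V}
    (hs : x ∈ Submodule.span F (v '' s)) (ht : x ∈ Submodule.span F (v '' t)) :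
    x ∈ Submodule.span F (v '' (s ∩ t)) := by
  rw [← span_image_inf hv]; exact ⟨hs, ht⟩
end PartA

section PartB
variable {F : Type*} [Field F] [Fintype F]
variable {V : Type*} [AddCommGroup V] [Module F V] [Finite V]

section Core

/-- Coset of a submodule is equivalent to the submodule. -/
noncomputable def cosetEquiv (W : Submodule F V) (y : V ⧸ W) :
    {x : V // W.mkQ x = y} ≃ W := by
  classical
  let x₀ := Classical.choose (W.mkQ_surjective y)
  have hx₀ : W.mkQ x₀ = y := Classical.choose_spec (W.mkQ_surjective y)
  exact
  { toFun := fun x => ⟨x.1 - x₀, (Submodule.Quotient.eq W).mp (x.2.trans hx₀.symm)⟩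
    invFun := fun z => ⟨x₀ + z.1, by
      rw [map_add, hx₀, show W.mkQ z.1 = 0 from (Submodule.Quotient.mk_eq_zero W).mpr z.2,
        add_zero]⟩
    left_inv := fun x => by ext; simp
    right_inv := fun z => by ext; simp }

theorem mem_sup_span_iff {m : ℕ} (W : Submodule F V) (w : Fin m → V) (A : Set (Fin m)) (x : V) :
    x ∈ W ⊔ Submodule.span F (w '' A) ↔
      W.mkQ x ∈ Submodule.span F ((W.mkQ ∘ w) '' A) := by
  rw [Set.image_comp, ← Submodule.map_span, ← Submodule.mem_comap, Submodule.comap_map_mkQ]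

theorem linearIndependent_mkQ_of_notmem {m : ℕ} (W : Submodule F V) (w : Fin m → V)
    (hw : ∀ s : Fin m, w s ∉ W ⊔ Submodule.span F (w '' {s' | s' < s})) :
    LinearIndependent F (W.mkQ ∘ w) := by
  classical
  rw [Fintype.linearIndependent_iff]
  intro g hg
  by_contra hne
  push_neg at hne
  have hSne : (Finset.univ.filter fun s => g s ≠ 0).Nonempty := by
    obtain ⟨s, hs⟩ := hne
    exact ⟨s, by simp [hs]⟩
  set s₀ := (Finset.univ.filter fun s => g s ≠ 0).max' hSne with hs₀def
  have hgs₀ : g s₀ ≠ 0 := by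
    have := (Finset.univ.filter fun s => g s ≠ 0).max'_mem hSne
    simpa using this
  have hlt : ∀ s : Fin m, g s ≠ 0 → s ≠ s₀ → s < s₀ := by
    intro s hs hne'
    exact lt_of_le_of_ne
      (Finset.le_max' _ s (by simp [hs])) hne'
  have hsplit : g s₀ • (W.mkQ ∘ w) s₀ = - ∑ s ∈ Finset.univ.erase s₀, g s • (W.mkQ ∘ w) s := by
    apply eq_neg_of_add_eq_zero_left
    exact (Finset.add_sum_erase _ _ (Finset.mem_univ s₀)).trans hg
  have hmem : g s₀ • (W.mkQ ∘ w) s₀ ∈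
      Submodule.span F ((W.mkQ ∘ w) '' {s' | s' < s₀}) := by
    rw [hsplit]
    refine neg_mem (Submodule.sum_mem _ ?_)
    intro s hs
    rcases eq_or_ne (g s) 0 with h0 | h0
    · simp [h0]
    · refine Submodule.smul_mem _ _ (Submodule.subset_span ?_)
      exact ⟨s, hlt s h0 (Finset.ne_of_mem_erase hs), rfl⟩
  have : (W.mkQ ∘ w) s₀ ∈ Submodule.span F ((W.mkQ ∘ w) '' {s' | s' < s₀}) := by
    have h2 := Submodule.smul_mem _ (g s₀)⁻¹ hmem
    rwa [smul_smul, inv_mul_cancel₀ hgs₀, one_smul] at h2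
  exact hw s₀ ((mem_sup_span_iff W w _ _).mpr this)

theorem notmem_of_linearIndependent_mkQ {m : ℕ} (W : Submodule F V) (w : Fin m → V)
    (hw : LinearIndependent F (W.mkQ ∘ w)) (s : Fin m) :
    w s ∉ W ⊔ Submodule.span F (w '' {s' | s' < s}) := by
  rw [mem_sup_span_iff]
  exact hw.notMem_span_image (by simp)

/-- Count of tuples successively avoiding `W` joined with the span of earlier vectors. -/
theorem card_notmem_tuples (W : Submodule F V) (m : ℕ)
    (h : finrank F W + m = finrank F V) :
    Nat.card {w : Fin m → V // ∀ s : Fin m,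
        w s ∉ W ⊔ Submodule.span F (w '' {s' : Fin m | s' < s})} =
      ∏ s ∈ Finset.range m, (Fintype.card F ^ finrank F V - Fintype.card F ^ (finrank F W + s)) := by
  classical
  letI : Fintype V := Fintype.ofFinite V
  have hfinquot : finrank F (V ⧸ W) = m := by
    have := Submodule.finrank_quotient_add_finrank W
    omega
  set P : (Fin m → V) → Prop := fun w => ∀ s : Fin m,
      w s ∉ W ⊔ Submodule.span F (w '' {s' : Fin m | s' < s}) with hP
  have hPiff : ∀ w, P w ↔ LinearIndependent F (W.mkQ ∘ w) := fun w =>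
    ⟨linearIndependent_mkQ_of_notmem W w, notmem_of_linearIndependent_mkQ W w⟩
  -- the projection map to linearly independent tuples in the quotient
  let f : {w : Fin m → V // P w} → {u : Fin m → V ⧸ W // LinearIndependent F u} :=
    fun w => ⟨W.mkQ ∘ w.1, (hPiff w.1).mp w.2⟩
  -- fibers
  have fiberEquiv : ∀ u : {u : Fin m → V ⧸ W // LinearIndependent F u},
      {w : {w : Fin m → V // P w} // f w = u} ≃ (Fin m → W) := by
    intro u
    refine Equiv.trans ?_ (Equiv.trans (Equiv.subtypePiEquivPi
      (p := fun s (x : V) => W.mkQ x = u.1 s)) (Equiv.piCongrRight fun s => cosetEquiv W (u.1 s)))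
    exact
    { toFun := fun w => ⟨w.1.1, fun s => congrFun (congrArg Subtype.val w.2) s⟩
      invFun := fun w => ⟨⟨w.1, by
          rw [hPiff]
          have : W.mkQ ∘ w.1 = u.1 := funext w.2
          rw [this]; exact u.2⟩, by
          apply Subtype.ext
          exact funext w.2⟩
      left_inv := fun w => by ext; rfl
      right_inv := fun w => by ext; rfl }
  have hcardfib : ∀ u, Nat.card {w : {w : Fin m → V // P w} // f w = u}
      = Fintype.card W ^ m := by
    intro u
    rw [Nat.card_congr (fiberEquiv u), Nat.card_eq_fintype_card, Fintype.card_pi]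
    simp
  have hsig : Nat.card {w : Fin m → V // P w}
      = Nat.card {u : Fin m → V ⧸ W // LinearIndependent F u} * Fintype.card W ^ m := by
    rw [← Nat.card_congr (Equiv.sigmaFiberEquiv f)]
    letI : Fintype {u : Fin m → V ⧸ W // LinearIndependent F u} := Fintype.ofFinite _
    letI : Fintype {w : Fin m → V // P w} := Fintype.ofFinite _
    rw [Nat.card_eq_fintype_card, Fintype.card_sigma, Nat.card_eq_fintype_card]
    rw [Finset.sum_congr rfl (fun u _ => by
      rw [← Nat.card_eq_fintype_card, hcardfib u])]
    rw [Finset.sum_const, Finset.card_univ, smul_eq_mul]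
  rw [hsig, card_linearIndependent (K := F) (V := V ⧸ W) (k := m) (le_of_eq hfinquot.symm)]
  have hcW : Fintype.card W = Fintype.card F ^ finrank F W := card_eq_pow_finrank
  rw [hcW, hfinquot]
  rw [Fin.prod_univ_eq_prod_range (fun i => Fintype.card F ^ m - Fintype.card F ^ i) m]
  have hc : (Fintype.card F ^ finrank F W) ^ m
      = ∏ _s ∈ Finset.range m, Fintype.card F ^ finrank F W := by
    rw [Finset.prod_const, Finset.card_range]
  rw [hc, ← Finset.prod_mul_distrib]
  refine Finset.prod_congr rfl fun s hs => ?_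
  rw [Nat.sub_mul, ← pow_add, ← pow_add]
  have h1 : m + finrank F W = finrank F V := by omega
  have h2 : s + finrank F W = finrank F W + s := by omega
  rw [h1, h2]

end Core

theorem mem_sup_span_subtype (E W : Submodule F V) (hWE : W ≤ E) {m : ℕ}
    (w : Fin m → E) (A : Set (Fin m)) (x : E) :
    (x : V) ∈ W ⊔ Submodule.span F ((fun t => (w t : V)) '' A) ↔
      x ∈ Submodule.comap E.subtype W ⊔ Submodule.span F (w '' A) := by
  have hmap : Submodule.map E.subtype (Submodule.comap E.subtype W ⊔ Submodule.span F (w '' A))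
      = W ⊔ Submodule.span F ((fun t => (w t : V)) '' A) := by
    rw [Submodule.map_sup, Submodule.map_comap_subtype, inf_eq_right.mpr hWE,
      Submodule.map_span, ← Set.image_comp]
    rfl
  rw [← hmap]
  constructor
  · intro h
    obtain ⟨y, hy, hyx⟩ := Submodule.mem_map.mp h
    have : y = x := Subtype.val_injective hyx
    rwa [this] at hy
  · intro h
    exact Submodule.mem_map_of_mem h

theorem card_locGrp (E W : Submodule F V) (hWE : W ≤ E) (m : ℕ)
    (hrk : finrank F W + m = finrank F E) :
    Nat.card {w : Fin m → V // ∀ s : Fin m, w s ∈ E ∧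
        w s ∉ W ⊔ Submodule.span F (w '' {s' : Fin m | s' < s})} =
      ∏ s ∈ Finset.range m,
        (Fintype.card F ^ finrank F E - Fintype.card F ^ (finrank F W + s)) := by
  classical
  set W' := Submodule.comap E.subtype W with hW'def
  have hW' : finrank F W' = finrank F W := (Submodule.comapSubtypeEquivOfLe hWE).finrank_eq
  have hEV : finrank F W' + m = finrank F E := by rw [hW']; exact hrk
  have e : {w : Fin m → V // ∀ s : Fin m, w s ∈ E ∧
        w s ∉ W ⊔ Submodule.span F (w '' {s' : Fin m | s' < s})}
      ≃ {w : Fin m → E // ∀ s : Fin m,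
        w s ∉ W' ⊔ Submodule.span F (w '' {s' : Fin m | s' < s})} :=
  { toFun := fun w => ⟨fun s => ⟨w.1 s, (w.2 s).1⟩, fun s hmem => (w.2 s).2
      ((mem_sup_span_subtype E W hWE (fun t => ⟨w.1 t, (w.2 t).1⟩)
        {s' : Fin m | s' < s} ⟨w.1 s, (w.2 s).1⟩).mpr hmem)⟩
    invFun := fun w => ⟨fun s => (w.1 s : V), fun s => ⟨(w.1 s).2, fun hmem => w.2 s
      ((mem_sup_span_subtype E W hWE w.1 {s' : Fin m | s' < s} (w.1 s)).mp hmem)⟩⟩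
    left_inv := fun w => Subtype.ext (funext fun s => rfl)
    right_inv := fun w => Subtype.ext (funext fun s => rfl) }
  rw [Nat.card_congr e, card_notmem_tuples W' m hEV, hW']
end PartB

section PartD
variable {F : Type*} [Field F]
variable {V : Type*} [AddCommGroup V] [Module F V]
variable {k l : ℕ} {M : ℕ → ℕ → ℕ}

/-- Index type: one slot for each unit in each cell of the matrix `M`. -/
abbrev Idx (k l : ℕ) (M : ℕ → ℕ → ℕ) : Type := (c : Fin k × Fin l) × Fin (M c.1 c.2)


/-- Flag induced by a family, first factor. -/
def indA (v : Idx k l M → V) (i : ℕ) : Submodule F V :=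
  Submodule.span F (v '' {p : Idx k l M | (p.1.1 : ℕ) < i})

/-- Flag induced by a family, second factor. -/
def indB (v : Idx k l M → V) (j : ℕ) : Submodule F V :=
  Submodule.span F (v '' {p : Idx k l M | (p.1.2 : ℕ) < j})

def Ecell (FF : Fin (k+1) → Submodule F V) (GG : Fin (l+1) → Submodule F V)
    (c : Fin k × Fin l) : Submodule F V := FF c.1.succ ⊓ GG c.2.succ

def Wcell (FF : Fin (k+1) → Submodule F V) (GG : Fin (l+1) → Submodule F V)
    (c : Fin k × Fin l) : Submodule F V :=
  (FF c.1.castSucc ⊓ GG c.2.succ) ⊔ (FF c.1.succ ⊓ GG c.2.castSucc)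

/-- Earlier slots in the same cell. -/
def earlier (p : Idx k l M) : Set (Idx k l M) :=
  {q : Idx k l M | q.1 = p.1 ∧ (q.2 : ℕ) < (p.2 : ℕ)}

/-- The local condition on a family of vectors relative to a pair of flags. -/
def LocP (FF : Fin (k+1) → Submodule F V) (GG : Fin (l+1) → Submodule F V)
    (v : Idx k l M → V) : Prop :=
  ∀ p : Idx k l M, v p ∈ Ecell FF GG p.1 ∧
    v p ∉ Wcell FF GG p.1 ⊔ Submodule.span F (v '' earlier p)

theorem loc_linearIndependent {FF : Fin (k+1) → Submodule F V}
    {GG : Fin (l+1) → Submodule F V} (hFF : Monotone FF) (hGG : Monotone GG)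
    {v : Idx k l M → V} (hv : LocP FF GG v) : LinearIndependent F v := by
  classical
  rw [Fintype.linearIndependent_iff]
  intro g hg
  by_contra hne
  push_neg at hne
  set S : Finset (Idx k l M) := Finset.univ.filter (fun p => g p ≠ 0) with hSdef
  have hSne : S.Nonempty := by
    obtain ⟨p, hp⟩ := hne
    exact ⟨p, by simp [hSdef, hp]⟩
  -- lexicographic key
  obtain ⟨p₀, hp₀S, hp₀max⟩ := S.exists_max_image
    (fun p => toLex ((p.1.1 : ℕ), toLex ((p.1.2 : ℕ), (p.2 : ℕ)))) hSne
  have hgp₀ : g p₀ ≠ 0 := by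
    have := hp₀S; simp [hSdef] at this; exact this
  -- comparison facts for indices with nonzero coefficient
  have hcmp : ∀ p : Idx k l M, g p ≠ 0 →
      ((p.1.1 : ℕ) < (p₀.1.1 : ℕ)) ∨
      ((p.1.1 : ℕ) = (p₀.1.1 : ℕ) ∧ (p.1.2 : ℕ) < (p₀.1.2 : ℕ)) ∨
      ((p.1.1 : ℕ) = (p₀.1.1 : ℕ) ∧ (p.1.2 : ℕ) = (p₀.1.2 : ℕ) ∧
        (p.2 : ℕ) ≤ (p₀.2 : ℕ)) := by
    intro p hp
    have hle : toLex (((p.1.1 : ℕ)), toLex (((p.1.2 : ℕ)), (p.2 : ℕ)))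
        ≤ toLex (((p₀.1.1 : ℕ)), toLex (((p₀.1.2 : ℕ)), (p₀.2 : ℕ))) :=
      hp₀max p (by simp [hSdef, hp])
    rcases Prod.Lex.le_iff.mp hle with h | ⟨h1, h2⟩
    · exact Or.inl h
    · rcases Prod.Lex.le_iff.mp h2 with h | ⟨h3, h4⟩
      · exact Or.inr (Or.inl ⟨h1, h⟩)
      · exact Or.inr (Or.inr ⟨h1, h3, h4⟩)
  set i₀ : Fin k := p₀.1.1 with hi₀
  set j₀ : Fin l := p₀.1.2 with hj₀
  -- predicates
  set QA : Idx k l M → Prop := fun p => (p.1.1 : ℕ) < (i₀ : ℕ) with hQA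
  set QB : Idx k l M → Prop := fun p => (p.1.1 : ℕ) = (i₀ : ℕ) ∧ (p.1.2 : ℕ) < (j₀ : ℕ) with hQB
  set QC : Idx k l M → Prop := fun p => p.1 = p₀.1 with hQC
  have hQCiff : ∀ p : Idx k l M, QC p ↔ ((p.1.1 : ℕ) = (i₀ : ℕ) ∧ (p.1.2 : ℕ) = (j₀ : ℕ)) := by
    intro p
    constructor
    · intro h
      have h' : p.1 = p₀.1 := h
      rw [h']; exact ⟨rfl, rfl⟩
    · rintro ⟨h1, h2⟩
      have e1 : p.1.1 = i₀ := Fin.ext h1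
      have e2 : p.1.2 = j₀ := Fin.ext h2
      show p.1 = p₀.1
      exact Prod.ext e1 e2
  -- split the total sum
  have hfBset : (Finset.univ.filter (fun p => ¬ QA p)).filter QB = Finset.univ.filter QB := by
    ext p
    simp only [Finset.mem_filter, Finset.mem_univ, true_and, hQA, hQB]
    omega
  have hfCset : ((Finset.univ.filter (fun p => ¬ QA p)).filter (fun p => ¬ QB p)).filter QC
      = Finset.univ.filter QC := by
    ext p
    simp only [Finset.mem_filter, Finset.mem_univ, true_and]
    constructor
    · rintro ⟨-, h⟩; exact h
    · intro h
      obtain ⟨h1, h2⟩ := (hQCiff p).mp h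
      refine ⟨⟨?_, ?_⟩, h⟩
      · simp only [hQA]; omega
      · simp only [hQB]; omega
  have step1 : ∑ p ∈ Finset.univ.filter QA, g p • v p
      + ∑ p ∈ Finset.univ.filter (fun p => ¬ QA p), g p • v p = 0 := by
    rw [Finset.sum_filter_add_sum_filter_not]; exact hg
  have step2 : ∑ p ∈ Finset.univ.filter (fun p => ¬ QA p), g p • v p
      = ∑ p ∈ Finset.univ.filter QB, g p • v p
        + ∑ p ∈ (Finset.univ.filter (fun p => ¬ QA p)).filter (fun p => ¬ QB p), g p • v p := by
    rw [← Finset.sum_filter_add_sum_filter_not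
      (Finset.univ.filter (fun p => ¬ QA p)) QB (fun p => g p • v p), hfBset]
  have step3 : ∑ p ∈ (Finset.univ.filter (fun p => ¬ QA p)).filter (fun p => ¬ QB p), g p • v p
      = ∑ p ∈ Finset.univ.filter QC, g p • v p := by
    rw [← Finset.sum_filter_add_sum_filter_not
      ((Finset.univ.filter (fun p => ¬ QA p)).filter (fun p => ¬ QB p)) QC (fun p => g p • v p),
      hfCset]
    have hrest : ∑ p ∈ ((Finset.univ.filter (fun p => ¬ QA p)).filter
        (fun p => ¬ QB p)).filter (fun p => ¬ QC p), g p • v p = 0 := by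
      apply Finset.sum_eq_zero
      intro p hp
      simp only [Finset.mem_filter, Finset.mem_univ, true_and] at hp
      obtain ⟨⟨hnQA, hnQB⟩, hnQC⟩ := hp
      by_contra hne0
      have hgne : g p ≠ 0 := fun h0 => hne0 (by rw [h0, zero_smul])
      rcases hcmp p hgne with h | h | h
      · exact hnQA h
      · exact hnQB h
      · exact hnQC ((hQCiff p).mpr ⟨h.1, h.2.1⟩)
    rw [hrest, add_zero]
  have hsplit : ∑ p ∈ Finset.univ.filter QA, g p • v p
      + (∑ p ∈ Finset.univ.filter QB, g p • v p
      + ∑ p ∈ Finset.univ.filter QC, g p • v p) = 0 := by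
    rw [← step3, ← step2]
    exact step1
  set a := ∑ p ∈ Finset.univ.filter QA, g p • v p with ha
  set b := ∑ p ∈ Finset.univ.filter QB, g p • v p with hb
  set c := ∑ p ∈ Finset.univ.filter QC, g p • v p with hc
  -- memberships
  have hamem : a ∈ FF i₀.castSucc := by
    apply Submodule.sum_mem
    intro p hp
    simp only [Finset.mem_filter, hQA] at hp
    apply Submodule.smul_mem
    have h1 : v p ∈ FF p.1.1.succ := ((hv p).1).1
    have h2 : FF p.1.1.succ ≤ FF i₀.castSucc := by
      apply hFF
      rw [Fin.le_def]
      simp only [Fin.val_succ, Fin.coe_castSucc]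
      omega
    exact h2 h1
  have hbmem : b ∈ FF i₀.succ ⊓ GG j₀.castSucc := by
    apply Submodule.sum_mem
    intro p hp
    simp only [Finset.mem_filter, hQB] at hp
    apply Submodule.smul_mem
    constructor
    · have h1 : v p ∈ FF p.1.1.succ := ((hv p).1).1
      have h2 : FF p.1.1.succ ≤ FF i₀.succ := by
        apply hFF; rw [Fin.le_def]; simp only [Fin.val_succ]; omega
      exact h2 h1
    · have h1 : v p ∈ GG p.1.2.succ := ((hv p).1).2
      have h2 : GG p.1.2.succ ≤ GG j₀.castSucc := by
        apply hGG; rw [Fin.le_def]; simp only [Fin.val_succ, Fin.coe_castSucc]; omega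
      exact h2 h1
  have hcmemE : c ∈ Ecell FF GG p₀.1 := by
    apply Submodule.sum_mem
    intro p hp
    simp only [Finset.mem_filter, hQC] at hp
    apply Submodule.smul_mem
    have := (hv p).1
    rwa [hp.2] at this
  -- c ∈ Wcell
  have hcW : c ∈ Wcell FF GG p₀.1 := by
    have hbc : b + c = -a := by
      apply eq_neg_of_add_eq_zero_left
      rw [add_comm]
      exact hsplit
    have hbcmem : b + c ∈ FF i₀.castSucc ⊓ GG j₀.succ := by
      constructor
      · rw [hbc]; exact Submodule.neg_mem _ hamem
      · apply Submodule.add_mem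
        · exact hGG (by rw [Fin.le_def]; simp only [Fin.val_succ, Fin.coe_castSucc]; omega)
            hbmem.2
        · exact hcmemE.2
    have h1 : b + c ∈ Wcell FF GG p₀.1 := le_sup_left (α := Submodule F V) hbcmem
    have h2 : b ∈ Wcell FF GG p₀.1 := le_sup_right (α := Submodule F V) hbmem
    have := Submodule.sub_mem _ h1 h2
    simpa using this
  -- isolate the top slot
  have hp₀mem : p₀ ∈ Finset.univ.filter QC := by simp [hQC]
  have hcsplit : g p₀ • v p₀
      = c - ∑ p ∈ (Finset.univ.filter QC).erase p₀, g p • v p :=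
    eq_sub_of_add_eq (Finset.add_sum_erase _ (fun p => g p • v p) hp₀mem)
  have herasemem : ∑ p ∈ (Finset.univ.filter QC).erase p₀, g p • v p
      ∈ Submodule.span F (v '' earlier p₀) := by
    apply Submodule.sum_mem
    intro p hp
    have hpne : p ≠ p₀ := Finset.ne_of_mem_erase hp
    have hpQC : p.1 = p₀.1 := by
      have := Finset.mem_of_mem_erase hp
      simp only [Finset.mem_filter, hQC] at this
      exact this.2
    rcases eq_or_ne (g p) 0 with h0 | h0
    · rw [h0, zero_smul]; exact Submodule.zero_mem _
    apply Submodule.smul_mem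
    apply Submodule.subset_span
    refine ⟨p, ⟨hpQC, ?_⟩, rfl⟩
    -- (p.2 : ℕ) < (p₀.2 : ℕ)
    have hle : (p.2 : ℕ) ≤ (p₀.2 : ℕ) := by
      rcases hcmp p h0 with h | h | h
      · exfalso; rw [hpQC] at h; exact lt_irrefl _ h
      · exfalso; rw [hpQC] at h; exact lt_irrefl _ h.2
      · exact h.2.2
    rcases lt_or_eq_of_le hle with h | h
    · exact h
    · exfalso
      apply hpne
      obtain ⟨c1, s1⟩ := p
      obtain ⟨c2, s2⟩ := p₀
      simp only at hpQC
      subst hpQC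
      simp only at h
      have : s1 = s2 := Fin.ext h
      rw [this]
  have hfinal : v p₀ ∈ Wcell FF GG p₀.1 ⊔ Submodule.span F (v '' earlier p₀) := by
    have hmem : g p₀ • v p₀ ∈ Wcell FF GG p₀.1 ⊔ Submodule.span F (v '' earlier p₀) := by
      rw [hcsplit]
      apply Submodule.sub_mem
      · exact le_sup_left (α := Submodule F V) hcW
      · exact le_sup_right (α := Submodule F V) herasemem
    have h2 := Submodule.smul_mem _ (g p₀)⁻¹ hmem
    rwa [smul_smul, inv_mul_cancel₀ hgp₀, one_smul] at h2
  exact (hv p₀).2 hfinal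

/-- Partial sums of the matrix `M`. -/
def D2 (M : ℕ → ℕ → ℕ) (i j : ℕ) : ℕ := ∑ i' ∈ Finset.range i, ∑ j' ∈ Finset.range j, M i' j'

theorem sum_ite_fin (k i : ℕ) (hi : i ≤ k) (f : ℕ → ℕ) :
    (∑ c : Fin k, if (c : ℕ) < i then f (c : ℕ) else 0) = ∑ i' ∈ Finset.range i, f i' := by
  rw [Fin.sum_univ_eq_sum_range (fun c => if c < i then f c else 0) k, ← Finset.sum_filter]
  congr 1
  ext x
  simp only [Finset.mem_filter, Finset.mem_range]
  omega


theorem card_cellSubtype (i j : ℕ) (hi : i ≤ k) (hj : j ≤ l) :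
    Nat.card {p : Idx k l M // (p.1.1 : ℕ) < i ∧ (p.1.2 : ℕ) < j} = D2 M i j := by
  classical
  rw [Nat.card_eq_fintype_card, Fintype.card_subtype, Finset.card_filter]
  rw [← Finset.univ_sigma_univ, Finset.sum_sigma]
  have hstep : ∀ c : Fin k × Fin l,
      (∑ s : Fin (M c.1 c.2), if ((⟨c, s⟩ : Idx k l M).1.1 : ℕ) < i
          ∧ ((⟨c, s⟩ : Idx k l M).1.2 : ℕ) < j then 1 else 0)
        = if (c.1 : ℕ) < i then (if (c.2 : ℕ) < j then M c.1 c.2 else 0) else 0 := by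
    intro c
    by_cases h1 : (c.1 : ℕ) < i <;> by_cases h2 : (c.2 : ℕ) < j <;>
      simp [h1, h2]
  rw [Finset.sum_congr rfl fun c _ => hstep c]
  rw [Fintype.sum_prod_type]
  have hpull : ∀ c1 : Fin k,
      (∑ c2 : Fin l, if (c1 : ℕ) < i then (if (c2 : ℕ) < j then M c1 c2 else 0) else 0)
        = if (c1 : ℕ) < i then (∑ c2 : Fin l, if (c2 : ℕ) < j then M c1 c2 else 0) else 0 := by
    intro c1
    by_cases h : (c1 : ℕ) < i <;> simp [h]
  rw [Finset.sum_congr rfl fun c1 _ => hpull c1]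
  rw [sum_ite_fin k i hi (fun i' => ∑ c2 : Fin l, if (c2 : ℕ) < j then M i' c2 else 0)]
  unfold D2
  refine Finset.sum_congr rfl fun i' _ => ?_
  exact sum_ite_fin l j hj (fun j' => M i' j')

theorem card_cellSubtypeA (i : ℕ) (hi : i ≤ k) :
    Nat.card {p : Idx k l M // (p.1.1 : ℕ) < i} = D2 M i l := by
  rw [← card_cellSubtype i l hi le_rfl]
  exact Nat.card_congr (Equiv.subtypeEquivRight (fun p => by
    constructor
    · intro h; exact ⟨h, p.1.2.isLt⟩
    · intro h; exact h.1))

theorem card_cellSubtypeB (j : ℕ) (hj : j ≤ l) :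
    Nat.card {p : Idx k l M // (p.1.2 : ℕ) < j} = D2 M k j := by
  rw [← card_cellSubtype k j le_rfl hj]
  exact Nat.card_congr (Equiv.subtypeEquivRight (fun p => by
    constructor
    · intro h; exact ⟨p.1.1.isLt, h⟩
    · intro h; exact h.2))


theorem finrank_span_image_subtype {ι : Type*} [Fintype ι] {v : ι → V}
    (hv : LinearIndependent F v) (s : Set ι) :
    finrank F (Submodule.span F (v '' s)) = Nat.card s := by
  classical
  have himg : v '' s = Set.range (fun x : s => v x) := Set.image_eq_range v s
  rw [himg, Nat.card_eq_fintype_card]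
  exact finrank_span_eq_card (hv.comp Subtype.val Subtype.val_injective)

/-- Rank of cell intersections of the induced flags. -/
theorem finrank_indA_inf_indB {v : Idx k l M → V} (hv : LinearIndependent F v)
    (i j : ℕ) (hi : i ≤ k) (hj : j ≤ l) :
    finrank F ((indA v i ⊓ indB v j : Submodule F V)) = D2 M i j := by
  rw [indA, indB, span_image_inf hv]
  have : {p : Idx k l M | (p.1.1 : ℕ) < i} ∩ {p : Idx k l M | (p.1.2 : ℕ) < j}
      = {p : Idx k l M | (p.1.1 : ℕ) < i ∧ (p.1.2 : ℕ) < j} := rfl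
  rw [this, finrank_span_image_subtype hv _]
  exact card_cellSubtype i j hi hj

theorem finrank_indA {v : Idx k l M → V} (hv : LinearIndependent F v)
    (i : ℕ) (hi : i ≤ k) : finrank F (indA (F := F) v i) = D2 M i l := by
  rw [indA, finrank_span_image_subtype hv _]
  exact card_cellSubtypeA i hi

theorem finrank_indB {v : Idx k l M → V} (hv : LinearIndependent F v)
    (j : ℕ) (hj : j ≤ l) : finrank F (indB (F := F) v j) = D2 M k j := by
  rw [indB, finrank_span_image_subtype hv _]
  exact card_cellSubtypeB j hj

/-- Adapted families satisfy the local condition. -/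
theorem loc_of_fib {FF : Fin (k+1) → Submodule F V} {GG : Fin (l+1) → Submodule F V}
    {v : Idx k l M → V} (hv : LinearIndependent F v)
    (hA : ∀ i : Fin (k+1), indA (F := F) v (i : ℕ) = FF i)
    (hB : ∀ j : Fin (l+1), indB (F := F) v (j : ℕ) = GG j) :
    LocP FF GG v := by
  intro p
  constructor
  · constructor
    · rw [← hA p.1.1.succ]
      refine Submodule.subset_span ⟨p, ?_, rfl⟩
      show (p.1.1 : ℕ) < (p.1.1.succ : ℕ)
      simp only [Fin.val_succ]
      omega
    · rw [← hB p.1.2.succ]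
      refine Submodule.subset_span ⟨p, ?_, rfl⟩
      show (p.1.2 : ℕ) < (p.1.2.succ : ℕ)
      simp only [Fin.val_succ]
      omega
  · intro hmem
    set S1 : Set (Idx k l M) :=
      {q | (q.1.1 : ℕ) < (p.1.1 : ℕ)} ∩ {q | (q.1.2 : ℕ) < (p.1.2 : ℕ) + 1} with hS1
    set S2 : Set (Idx k l M) :=
      {q | (q.1.1 : ℕ) < (p.1.1 : ℕ) + 1} ∩ {q | (q.1.2 : ℕ) < (p.1.2 : ℕ)} with hS2
    have hW : Wcell FF GG p.1 ⊔ Submodule.span F (v '' earlier p)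
        = Submodule.span F (v '' (S1 ∪ S2 ∪ earlier p)) := by
      rw [Wcell]
      rw [show FF p.1.1.castSucc ⊓ GG p.1.2.succ = Submodule.span F (v '' S1) from by
        rw [← hA p.1.1.castSucc, ← hB p.1.2.succ, indA, indB, span_image_inf hv]
        simp only [Fin.coe_castSucc, Fin.val_succ]; rfl]
      rw [show FF p.1.1.succ ⊓ GG p.1.2.castSucc = Submodule.span F (v '' S2) from by
        rw [← hA p.1.1.succ, ← hB p.1.2.castSucc, indA, indB, span_image_inf hv]
        simp only [Fin.coe_castSucc, Fin.val_succ]; rfl]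
      rw [← Submodule.span_union, ← Submodule.span_union, ← Set.image_union, ← Set.image_union]
    rw [hW] at hmem
    refine hv.notMem_span_image (s := S1 ∪ S2 ∪ earlier p) ?_ hmem
    rintro ((h | h) | h)
    · simp only [hS1, Set.mem_inter_iff, Set.mem_setOf_eq] at h
      omega
    · simp only [hS2, Set.mem_inter_iff, Set.mem_setOf_eq] at h
      omega
    · simp only [earlier, Set.mem_setOf_eq] at h
      omega

/-- Local families induce the given flags. -/
theorem fib_of_loc {FF : Fin (k+1) → Submodule F V} {GG : Fin (l+1) → Submodule F V}
    [Finite V]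
    {v : Idx k l M → V} (hFF : Monotone FF) (hGG : Monotone GG)
    (hrkA : ∀ i : Fin (k+1), finrank F (FF i) = D2 M (i : ℕ) l)
    (hrkB : ∀ j : Fin (l+1), finrank F (GG j) = D2 M k (j : ℕ))
    (hloc : LocP FF GG v) :
    (∀ i : Fin (k+1), indA (F := F) v (i : ℕ) = FF i)
      ∧ (∀ j : Fin (l+1), indB (F := F) v (j : ℕ) = GG j) := by
  have hv : LinearIndependent F v := loc_linearIndependent hFF hGG hloc
  constructor
  · intro i
    refine Submodule.eq_of_le_of_finrank_eq ?_ ?_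
    · rw [indA]
      rw [Submodule.span_le]
      rintro x ⟨p, hp, rfl⟩
      have h1 : v p ∈ FF p.1.1.succ := (hloc p).1.1
      have h2 : FF p.1.1.succ ≤ FF i := by
        apply hFF
        rw [Fin.le_def]
        simp only [Fin.val_succ]
        exact hp
      exact h2 h1
    · rw [finrank_indA hv (i : ℕ) (by omega), hrkA i]
  · intro j
    refine Submodule.eq_of_le_of_finrank_eq ?_ ?_
    · rw [indB]
      rw [Submodule.span_le]
      rintro x ⟨p, hp, rfl⟩
      have h1 : v p ∈ GG p.1.2.succ := (hloc p).1.2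
      have h2 : GG p.1.2.succ ≤ GG j := by
        apply hGG
        rw [Fin.le_def]
        simp only [Fin.val_succ]
        exact hp
      exact h2 h1
    · rw [finrank_indB hv (j : ℕ) (by omega), hrkB j]
end PartD

section PartF1
variable {F : Type*} [Field F]
variable {V : Type*} [AddCommGroup V] [Module F V]
variable {k l : ℕ} {M : ℕ → ℕ → ℕ}

theorem indA_mono (v : Idx k l M → V) : Monotone (fun i : ℕ => indA (F := F) v i) :=
  fun _ _ hij => Submodule.span_mono (Set.image_mono fun _ hp => lt_of_lt_of_le hp hij)

theorem indB_mono (v : Idx k l M → V) : Monotone (fun j : ℕ => indB (F := F) v j) :=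
  fun _ _ hij => Submodule.span_mono (Set.image_mono fun _ hp => lt_of_lt_of_le hp hij)

theorem indA_zero (v : Idx k l M → V) : indA (F := F) v 0 = ⊥ := by
  rw [indA]
  have : {p : Idx k l M | (p.1.1 : ℕ) < 0} = ∅ := by
    ext p; simp
  rw [this, Set.image_empty, Submodule.span_empty]

theorem indB_zero (v : Idx k l M → V) : indB (F := F) v 0 = ⊥ := by
  rw [indB]
  have : {p : Idx k l M | (p.1.2 : ℕ) < 0} = ∅ := by
    ext p; simp
  rw [this, Set.image_empty, Submodule.span_empty]

theorem indA_last [Finite V] {v : Idx k l M → V} (hv : LinearIndependent F v)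
    (hcard : Fintype.card (Idx k l M) = finrank F V) : indA (F := F) v k = ⊤ := by
  have hset : {p : Idx k l M | (p.1.1 : ℕ) < k} = Set.univ := by
    ext p; simpa using p.1.1.isLt
  rw [indA, hset, Set.image_univ]
  apply Submodule.eq_top_of_finrank_eq
  rw [finrank_span_eq_card hv, hcard]

theorem indB_last [Finite V] {v : Idx k l M → V} (hv : LinearIndependent F v)
    (hcard : Fintype.card (Idx k l M) = finrank F V) : indB (F := F) v l = ⊤ := by
  have hset : {p : Idx k l M | (p.1.2 : ℕ) < l} = Set.univ := by
    ext p; simpa using p.1.2.isLt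
  rw [indB, hset, Set.image_univ]
  apply Submodule.eq_top_of_finrank_eq
  rw [finrank_span_eq_card hv, hcard]

theorem isNilpotent_of_compat [Finite V] {v : Idx k l M → V} (N : V →ₗ[F] V)
    (hv : LinearIndependent F v)
    (hcard : Fintype.card (Idx k l M) = finrank F V)
    (hcompat : ∀ i : Fin k, ∀ x ∈ indA (F := F) v ((i : ℕ) + 1),
      N x ∈ indA (F := F) v (i : ℕ)) :
    IsNilpotent N := by
  have main : ∀ i : ℕ, i ≤ k → ∀ x ∈ indA (F := F) v i, (N ^ i) x = 0 := by
    intro i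
    induction i with
    | zero =>
      intro _ x hx
      rw [indA_zero] at hx
      rw [pow_zero]
      simpa using hx
    | succ i ih =>
      intro hik x hx
      have hNx : N x ∈ indA (F := F) v i := hcompat ⟨i, by omega⟩ x hx
      have hz := ih (by omega) (N x) hNx
      rw [pow_succ, Module.End.mul_apply]
      exact hz
  refine ⟨k, LinearMap.ext fun x => ?_⟩
  have hx : x ∈ indA (F := F) v k := by
    rw [indA_last hv hcard]; exact Submodule.mem_top
  simpa using main k le_rfl x hx
end PartF1

section PartF2
variable {F : Type*} [Field F] [Fintype F]
variable {V : Type*} [AddCommGroup V] [Module F V] [Finite V]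
variable {k l : ℕ} {M : ℕ → ℕ → ℕ}

theorem card_submodule (S : Submodule F V) :
    Nat.card S = Fintype.card F ^ finrank F S := by
  letI : Fintype V := Fintype.ofFinite V
  letI : Fintype S := Fintype.ofFinite S
  rw [Nat.card_eq_fintype_card]
  exact card_eq_pow_finrank

theorem card_compatN {v : Idx k l M → V} (hv : LinearIndependent F v)
    (hcard : Fintype.card (Idx k l M) = finrank F V) :
    Nat.card {N : V →ₗ[F] V //
      (∀ i : Fin k, ∀ x ∈ indA (F := F) v ((i : ℕ) + 1), N x ∈ indA (F := F) v (i : ℕ)) ∧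
      (∀ j : Fin l, ∀ x ∈ indB (F := F) v ((j : ℕ) + 1), N x ∈ indB (F := F) v (j : ℕ))}
    = ∏ p : Idx k l M,
        Nat.card (↥(indA (F := F) v (p.1.1 : ℕ) ⊓ indB (F := F) v (p.1.2 : ℕ))) := by
  classical
  have hspan : ⊤ ≤ Submodule.span F (Set.range v) := by
    rw [show Submodule.span F (Set.range v) = ⊤ from
      Submodule.eq_top_of_finrank_eq (by rw [finrank_span_eq_card hv, hcard])]
  set b : Basis (Idx k l M) F V := Basis.mk hv hspan with hbdef
  have hbv : ∀ p, b p = v p := Basis.mk_apply hv hspan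
  have e : {N : V →ₗ[F] V //
      (∀ i : Fin k, ∀ x ∈ indA (F := F) v ((i : ℕ) + 1), N x ∈ indA (F := F) v (i : ℕ)) ∧
      (∀ j : Fin l, ∀ x ∈ indB (F := F) v ((j : ℕ) + 1), N x ∈ indB (F := F) v (j : ℕ))}
      ≃ ∀ p : Idx k l M,
        ↥(indA (F := F) v (p.1.1 : ℕ) ⊓ indB (F := F) v (p.1.2 : ℕ)) :=
  { toFun := fun N p => ⟨N.1 (v p), by
      constructor
      · refine N.2.1 p.1.1 (v p) (Submodule.subset_span ⟨p, ?_, rfl⟩)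
        show (p.1.1 : ℕ) < (p.1.1 : ℕ) + 1
        omega
      · refine N.2.2 p.1.2 (v p) (Submodule.subset_span ⟨p, ?_, rfl⟩)
        show (p.1.2 : ℕ) < (p.1.2 : ℕ) + 1
        omega⟩
    invFun := fun f => ⟨b.constr F (fun p => (f p).1), by
      constructor
      · intro i x hx
        refine Submodule.span_induction ?_ ?_ ?_ ?_ hx
        · rintro _ ⟨p, hp, rfl⟩
          rw [← hbv p, Basis.constr_basis]
          have h1 : (f p).1 ∈ indA (F := F) v (p.1.1 : ℕ) := (f p).2.1
          have h2 : indA (F := F) v (p.1.1 : ℕ) ≤ indA (F := F) v (i : ℕ) :=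
            indA_mono v (by have : (p.1.1 : ℕ) < (i : ℕ) + 1 := hp; omega)
          exact h2 h1
        · rw [map_zero]; exact Submodule.zero_mem _
        · intro x y _ _ hx hy; rw [map_add]; exact Submodule.add_mem _ hx hy
        · intro a x _ hx; rw [map_smul]; exact Submodule.smul_mem _ a hx
      · intro j x hx
        refine Submodule.span_induction ?_ ?_ ?_ ?_ hx
        · rintro _ ⟨p, hp, rfl⟩
          rw [← hbv p, Basis.constr_basis]
          have h1 : (f p).1 ∈ indB (F := F) v (p.1.2 : ℕ) := (f p).2.2
          have h2 : indB (F := F) v (p.1.2 : ℕ) ≤ indB (F := F) v (j : ℕ) :=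
            indB_mono v (by have : (p.1.2 : ℕ) < (j : ℕ) + 1 := hp; omega)
          exact h2 h1
        · rw [map_zero]; exact Submodule.zero_mem _
        · intro x y _ _ hx hy; rw [map_add]; exact Submodule.add_mem _ hx hy
        · intro a x _ hx; rw [map_smul]; exact Submodule.smul_mem _ a hx⟩
    left_inv := fun N => by
      apply Subtype.ext
      apply b.ext
      intro p
      rw [Basis.constr_basis, hbv p]
    right_inv := fun f => by
      funext p
      apply Subtype.ext
      show (b.constr F (fun p => (f p).1)) (v p) = (f p).1
      rw [← hbv p, Basis.constr_basis] }
  rw [Nat.card_congr e, Nat.card_pi]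

theorem prod_idx_eq (f : Fin k × Fin l → ℕ) :
    (∏ p : Idx k l M, f p.1) = ∏ c : Fin k × Fin l, f c ^ (M c.1 c.2) := by
  rw [← Finset.univ_sigma_univ, Finset.prod_sigma]
  refine Finset.prod_congr rfl fun c _ => ?_
  show (∏ _s : Fin (M c.1 c.2), f c) = f c ^ M c.1 c.2
  rw [Finset.prod_const, Finset.card_univ, Fintype.card_fin]

theorem card_indep_tuples (hcard : Fintype.card (Idx k l M) = finrank F V) :
    Nat.card {v : Idx k l M → V // LinearIndependent F v}
      = ∏ s ∈ Finset.range (finrank F V),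
          (Fintype.card F ^ finrank F V - Fintype.card F ^ s) := by
  classical
  set e := Fintype.equivFin (Idx k l M) with hedef
  have eq1 : {v : Idx k l M → V // LinearIndependent F v}
      ≃ {w : Fin (Fintype.card (Idx k l M)) → V // LinearIndependent F w} :=
  { toFun := fun v => ⟨v.1 ∘ e.symm, v.2.comp e.symm e.symm.injective⟩
    invFun := fun w => ⟨w.1 ∘ e, w.2.comp e e.injective⟩
    left_inv := fun v => by
      apply Subtype.ext; funext p; simp
    right_inv := fun w => by
      apply Subtype.ext; funext s; simp }
  rw [Nat.card_congr eq1, card_linearIndependent (le_of_eq hcard)]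
  rw [Fin.prod_univ_eq_prod_range
    (fun s => Fintype.card F ^ finrank F V - Fintype.card F ^ s), hcard]

/-- The set of pairs (grouped tuple, compatible endomorphism). -/
def Xset (F : Type*) [Field F] (V : Type*) [AddCommGroup V] [Module F V]
    (k l : ℕ) (M : ℕ → ℕ → ℕ) : Type _ :=
  {vN : (Idx k l M → V) × (V →ₗ[F] V) // LinearIndependent F vN.1 ∧
    (∀ i : Fin k, ∀ x ∈ indA (F := F) vN.1 ((i : ℕ) + 1), vN.2 x ∈ indA (F := F) vN.1 (i : ℕ)) ∧
    (∀ j : Fin l, ∀ x ∈ indB (F := F) vN.1 ((j : ℕ) + 1), vN.2 x ∈ indB (F := F) vN.1 (j : ℕ))}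

theorem card_Xset (hk : ∀ c : Fin k × Fin l, (c.1 : ℕ) ≤ k ∧ (c.2 : ℕ) ≤ l)
    (hcard : Fintype.card (Idx k l M) = finrank F V) :
    Nat.card (Xset F V k l M)
      = (∏ s ∈ Finset.range (finrank F V),
          (Fintype.card F ^ finrank F V - Fintype.card F ^ s))
        * ∏ c : Fin k × Fin l,
            (Fintype.card F ^ D2 M (c.1 : ℕ) (c.2 : ℕ)) ^ (M c.1 c.2) := by
  classical
  have esig : Xset F V k l M ≃ Σ (v : {v : Idx k l M → V // LinearIndependent F v}),
      {N : V →ₗ[F] V //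
      (∀ i : Fin k, ∀ x ∈ indA (F := F) v.1 ((i : ℕ) + 1), N x ∈ indA (F := F) v.1 (i : ℕ)) ∧
      (∀ j : Fin l, ∀ x ∈ indB (F := F) v.1 ((j : ℕ) + 1), N x ∈ indB (F := F) v.1 (j : ℕ))} :=
  { toFun := fun x => ⟨⟨x.1.1, x.2.1⟩, ⟨x.1.2, x.2.2⟩⟩
    invFun := fun y => ⟨⟨y.1.1, y.2.1⟩, y.1.2, y.2.2⟩
    left_inv := fun x => rfl
    right_inv := fun y => rfl }
  rw [Nat.card_congr esig]
  letI : Fintype {v : Idx k l M → V // LinearIndependent F v} := Fintype.ofFinite _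
  letI : ∀ (v : {v : Idx k l M → V // LinearIndependent F v}), Fintype {N : V →ₗ[F] V //
      (∀ i : Fin k, ∀ x ∈ indA (F := F) v.1 ((i : ℕ) + 1), N x ∈ indA (F := F) v.1 (i : ℕ)) ∧
      (∀ j : Fin l, ∀ x ∈ indB (F := F) v.1 ((j : ℕ) + 1), N x ∈ indB (F := F) v.1 (j : ℕ))} := by
    intro v
    have : Finite (V →ₗ[F] V) := Finite.of_injective _ DFunLike.coe_injective
    exact Fintype.ofFinite _
  rw [Nat.card_eq_fintype_card, Fintype.card_sigma]
  have hconst : ∀ v : {v : Idx k l M → V // LinearIndependent F v},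
      Fintype.card {N : V →ₗ[F] V //
      (∀ i : Fin k, ∀ x ∈ indA (F := F) v.1 ((i : ℕ) + 1), N x ∈ indA (F := F) v.1 (i : ℕ)) ∧
      (∀ j : Fin l, ∀ x ∈ indB (F := F) v.1 ((j : ℕ) + 1), N x ∈ indB (F := F) v.1 (j : ℕ))}
      = ∏ c : Fin k × Fin l, (Fintype.card F ^ D2 M (c.1 : ℕ) (c.2 : ℕ)) ^ (M c.1 c.2) := by
    intro v
    rw [← Nat.card_eq_fintype_card, card_compatN v.2 hcard]
    rw [show (∏ p : Idx k l M,
        Nat.card (↥(indA (F := F) v.1 (p.1.1 : ℕ) ⊓ indB (F := F) v.1 (p.1.2 : ℕ))))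
        = ∏ p : Idx k l M, Fintype.card F ^ D2 M (p.1.1 : ℕ) (p.1.2 : ℕ) from
      Finset.prod_congr rfl fun p _ => by
        rw [card_submodule, finrank_indA_inf_indB v.2 _ _ (le_of_lt p.1.1.isLt)
          (le_of_lt p.1.2.isLt)]]
    exact prod_idx_eq (fun c => Fintype.card F ^ D2 M (c.1 : ℕ) (c.2 : ℕ))
  rw [Finset.sum_congr rfl fun v _ => hconst v, Finset.sum_const, Finset.card_univ,
    smul_eq_mul, ← Nat.card_eq_fintype_card, card_indep_tuples hcard]

end PartF2

section PartF3
variable {F : Type*} [Field F] [Fintype F]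
variable {V : Type*} [AddCommGroup V] [Module F V] [Finite V]
variable {k l : ℕ} {M : ℕ → ℕ → ℕ}

/-- Rank of the cell-wall subspace. -/
def Wn (M : ℕ → ℕ → ℕ) (i j : ℕ) : ℕ :=
  D2 M i j + (∑ i' ∈ Finset.range i, M i' j) + (∑ j' ∈ Finset.range j, M i j')

theorem D2_succ_right (M : ℕ → ℕ → ℕ) (i j : ℕ) :
    D2 M i (j + 1) = D2 M i j + ∑ i' ∈ Finset.range i, M i' j := by
  unfold D2
  rw [← Finset.sum_add_distrib]
  exact Finset.sum_congr rfl fun i' _ => Finset.sum_range_succ _ _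

theorem D2_succ_left (M : ℕ → ℕ → ℕ) (i j : ℕ) :
    D2 M (i + 1) j = D2 M i j + ∑ j' ∈ Finset.range j, M i j' := by
  unfold D2
  exact Finset.sum_range_succ _ _

theorem Wn_add (M : ℕ → ℕ → ℕ) (i j : ℕ) :
    Wn M i j + M i j = D2 M (i + 1) (j + 1) := by
  have h1 := D2_succ_right M (i + 1) j
  have h2 := D2_succ_left M i j
  have h3 : ∑ i' ∈ Finset.range (i + 1), M i' j
      = (∑ i' ∈ Finset.range i, M i' j) + M i j := Finset.sum_range_succ _ _
  have h4 := D2_succ_left M i (j + 1)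
  unfold Wn
  omega

theorem image_earlier (v : Idx k l M → V) (c : Fin k × Fin l) (s : Fin (M c.1 c.2)) :
    v '' earlier (⟨c, s⟩ : Idx k l M) = (fun s' => v ⟨c, s'⟩) '' {s' | s' < s} := by
  ext x
  constructor
  · rintro ⟨⟨c', s'⟩, ⟨h1, h2⟩, rfl⟩
    simp only at h1
    subst h1
    exact ⟨s', h2, rfl⟩
  · rintro ⟨s', hs', rfl⟩
    exact ⟨⟨c, s'⟩, ⟨rfl, hs'⟩, rfl⟩

theorem Wcell_le_Ecell {FF : Fin (k+1) → Submodule F V} {GG : Fin (l+1) → Submodule F V}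
    (hFF : Monotone FF) (hGG : Monotone GG) (c : Fin k × Fin l) :
    Wcell FF GG c ≤ Ecell FF GG c := by
  apply sup_le
  · exact inf_le_inf_right _ (hFF (Fin.castSucc_le_succ c.1))
  · exact inf_le_inf_left _ (hGG (Fin.castSucc_le_succ c.2))

theorem finrank_Wcell {FF : Fin (k+1) → Submodule F V} {GG : Fin (l+1) → Submodule F V}
    (hFF : Monotone FF) (hGG : Monotone GG)
    (hpos : ∀ (i : Fin (k+1)) (j : Fin (l+1)),
      finrank F ((FF i ⊓ GG j : Submodule F V)) = D2 M (i : ℕ) (j : ℕ))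
    (c : Fin k × Fin l) :
    finrank F (Wcell FF GG c) = Wn M (c.1 : ℕ) (c.2 : ℕ) := by
  set A := FF c.1.castSucc ⊓ GG c.2.succ with hA
  set B := FF c.1.succ ⊓ GG c.2.castSucc with hB
  have hABinf : A ⊓ B = FF c.1.castSucc ⊓ GG c.2.castSucc := by
    apply le_antisymm
    · apply le_inf
      · exact inf_le_left.trans inf_le_left
      · exact inf_le_right.trans inf_le_right
    · apply le_inf
      · exact le_inf inf_le_left (inf_le_right.trans (hGG (Fin.castSucc_le_succ c.2)))
      · exact le_inf (inf_le_left.trans (hFF (Fin.castSucc_le_succ c.1))) inf_le_right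
  have hsum := Submodule.finrank_sup_add_finrank_inf_eq A B
  rw [hABinf] at hsum
  have hvA : finrank F A = D2 M (c.1 : ℕ) ((c.2 : ℕ) + 1) := by
    rw [hA, hpos c.1.castSucc c.2.succ, Fin.coe_castSucc, Fin.val_succ]
  have hvB : finrank F B = D2 M ((c.1 : ℕ) + 1) (c.2 : ℕ) := by
    rw [hB, hpos c.1.succ c.2.castSucc, Fin.coe_castSucc, Fin.val_succ]
  have hvAB : finrank F ((FF c.1.castSucc ⊓ GG c.2.castSucc : Submodule F V))
      = D2 M (c.1 : ℕ) (c.2 : ℕ) := by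
    rw [hpos c.1.castSucc c.2.castSucc, Fin.coe_castSucc, Fin.coe_castSucc]
  rw [hvA, hvB, hvAB] at hsum
  have h1 := D2_succ_right M (c.1 : ℕ) (c.2 : ℕ)
  have h2 := D2_succ_left M (c.1 : ℕ) (c.2 : ℕ)
  show finrank F ((A ⊔ B : Submodule F V)) = Wn M (c.1 : ℕ) (c.2 : ℕ)
  unfold Wn
  omega

theorem card_loc {FF : Fin (k+1) → Submodule F V} {GG : Fin (l+1) → Submodule F V}
    (hFF : Monotone FF) (hGG : Monotone GG)
    (hpos : ∀ (i : Fin (k+1)) (j : Fin (l+1)),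
      finrank F ((FF i ⊓ GG j : Submodule F V)) = D2 M (i : ℕ) (j : ℕ)) :
    Nat.card {v : Idx k l M → V // LocP FF GG v}
      = ∏ c : Fin k × Fin l, ∏ s ∈ Finset.range (M c.1 c.2),
          (Fintype.card F ^ D2 M ((c.1 : ℕ) + 1) ((c.2 : ℕ) + 1)
            - Fintype.card F ^ (Wn M (c.1 : ℕ) (c.2 : ℕ) + s)) := by
  classical
  have e : {v : Idx k l M → V // LocP FF GG v}
      ≃ ∀ c : Fin k × Fin l, {w : Fin (M c.1 c.2) → V // ∀ s,
          w s ∈ Ecell FF GG c ∧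
          w s ∉ Wcell FF GG c ⊔ Submodule.span F (w '' {s' | s' < s})} :=
  { toFun := fun v c => ⟨fun s => v.1 ⟨c, s⟩, fun s => by
      have h := v.2 ⟨c, s⟩
      rwa [image_earlier v.1 c s] at h⟩
    invFun := fun w => ⟨fun p => (w p.1).1 p.2, fun p => by
      have h := (w p.1).2 p.2
      have himg : (fun p : Idx k l M => (w p.1).1 p.2) '' earlier p
          = (w p.1).1 '' {s' | s' < p.2} := by
        rw [show p = (⟨p.1, p.2⟩ : Idx k l M) from rfl,
          image_earlier (fun p : Idx k l M => (w p.1).1 p.2) p.1 p.2]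
      rw [himg]
      exact h⟩
    left_inv := fun v => Subtype.ext (funext fun p => rfl)
    right_inv := fun w => funext fun c => Subtype.ext (funext fun s => rfl) }
  rw [Nat.card_congr e, Nat.card_pi]
  refine Finset.prod_congr rfl fun c _ => ?_
  have hWE := Wcell_le_Ecell hFF hGG c
  have hErank : finrank F (Ecell FF GG c) = D2 M ((c.1 : ℕ) + 1) ((c.2 : ℕ) + 1) := by
    rw [Ecell, hpos c.1.succ c.2.succ, Fin.val_succ, Fin.val_succ]
  have hWrank := finrank_Wcell hFF hGG hpos c
  have hrk : finrank F (Wcell FF GG c) + M c.1 c.2 = finrank F (Ecell FF GG c) := by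
    rw [hErank, hWrank]
    exact Wn_add M _ _
  rw [card_locGrp (Ecell FF GG c) (Wcell FF GG c) hWE (M c.1 c.2) hrk, hErank, hWrank]

end PartF3

section PartF4
variable {F : Type*} [Field F] [Fintype F]
variable {n k l : ℕ} {α β : ℕ → ℕ} {M : ℕ → ℕ → ℕ}

theorem D2_row (hMrow : ∀ i, ∑ j ∈ Finset.range l, M i j = α i) (i : ℕ) :
    D2 M i l = ∑ s ∈ Finset.range i, α s := by
  unfold D2
  exact Finset.sum_congr rfl fun i' _ => hMrow i'

theorem D2_col (hMcol : ∀ j, ∑ i ∈ Finset.range k, M i j = β j) (j : ℕ) :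
    D2 M k j = ∑ s ∈ Finset.range j, β s := by
  unfold D2
  rw [Finset.sum_comm]
  exact Finset.sum_congr rfl fun j' _ => hMcol j'

theorem cardIdx : Fintype.card (Idx k l M) = D2 M k l := by
  rw [Fintype.card_sigma]
  simp only [Fintype.card_fin]
  rw [Fintype.sum_prod_type]
  refine Eq.trans (Finset.sum_congr rfl fun x _ =>
    Fin.sum_univ_eq_sum_range (fun j => M (x : ℕ) j) l) ?_
  exact Fin.sum_univ_eq_sum_range (fun i => ∑ j ∈ Finset.range l, M i j) k

/-- The set of triples from the theorem. -/
def Tset (F : Type*) [Field F] (n k l : ℕ) (α β : ℕ → ℕ) (M : ℕ → ℕ → ℕ) : Type _ :=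
  {FFN : (Fin (k + 1) → Submodule F (Fin n → F))
      × (Fin (l + 1) → Submodule F (Fin n → F))
      × ((Fin n → F) →ₗ[F] (Fin n → F)) //
      Monotone FFN.1 ∧ FFN.1 0 = ⊥ ∧ FFN.1 (Fin.last k) = ⊤ ∧
      (∀ i : Fin (k + 1),
        finrank F (FFN.1 i) = ∑ s ∈ Finset.range (i : ℕ), α s) ∧
      Monotone FFN.2.1 ∧ FFN.2.1 0 = ⊥ ∧ FFN.2.1 (Fin.last l) = ⊤ ∧
      (∀ j : Fin (l + 1),
        finrank F (FFN.2.1 j) = ∑ s ∈ Finset.range (j : ℕ), β s) ∧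
      (∀ (i : Fin (k + 1)) (j : Fin (l + 1)),
        finrank F ((FFN.1 i ⊓ FFN.2.1 j : Submodule F (Fin n → F)))
          = ∑ i' ∈ Finset.range (i : ℕ), ∑ j' ∈ Finset.range (j : ℕ), M i' j') ∧
      IsNilpotent FFN.2.2 ∧
      (∀ i : Fin k, ∀ x ∈ FFN.1 i.succ, FFN.2.2 x ∈ FFN.1 i.castSucc) ∧
      (∀ j : Fin l, ∀ x ∈ FFN.2.1 j.succ, FFN.2.2 x ∈ FFN.2.1 j.castSucc)}

theorem hcardIdx (hMrow : ∀ i, ∑ j ∈ Finset.range l, M i j = α i)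
    (hαsum : ∑ i ∈ Finset.range k, α i = n) :
    Fintype.card (Idx k l M) = finrank F (Fin n → F) := by
  rw [cardIdx, Module.finrank_fintype_fun_eq_card, Fintype.card_fin, D2_row hMrow, hαsum]

/-- The map from pairs (grouped tuple, endomorphism) to triples. -/
def toTriple (hMrow : ∀ i, ∑ j ∈ Finset.range l, M i j = α i)
    (hαsum : ∑ i ∈ Finset.range k, α i = n)
    (hMcol : ∀ j, ∑ i ∈ Finset.range k, M i j = β j)
    (x : Xset F (Fin n → F) k l M) : Tset F n k l α β M := by
  refine ⟨(fun i : Fin (k+1) => indA (F := F) x.1.1 (i : ℕ),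
    fun j : Fin (l+1) => indB (F := F) x.1.1 (j : ℕ), x.1.2), ?_⟩
  obtain ⟨⟨v, N⟩, hv, hcA, hcB⟩ := x
  have hcard' : Fintype.card (Idx k l M) = finrank F (Fin n → F) := hcardIdx hMrow hαsum
  refine ⟨?_, ?_, ?_, ?_, ?_, ?_, ?_, ?_, ?_, ?_, ?_, ?_⟩
  · intro i j hij
    exact indA_mono v (Fin.le_def.mp hij)
  · show indA (F := F) v ((0 : Fin (k+1)) : ℕ) = ⊥
    rw [Fin.val_zero]
    exact indA_zero v
  · show indA (F := F) v ((Fin.last k : Fin (k+1)) : ℕ) = ⊤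
    rw [Fin.val_last]
    exact indA_last hv hcard'
  · intro i
    show finrank F (indA (F := F) v (i : ℕ)) = _
    rw [finrank_indA hv (i : ℕ) (by omega), D2_row hMrow]
  · intro i j hij
    exact indB_mono v (Fin.le_def.mp hij)
  · show indB (F := F) v ((0 : Fin (l+1)) : ℕ) = ⊥
    rw [Fin.val_zero]
    exact indB_zero v
  · show indB (F := F) v ((Fin.last l : Fin (l+1)) : ℕ) = ⊤
    rw [Fin.val_last]
    exact indB_last hv hcard'
  · intro j
    show finrank F (indB (F := F) v (j : ℕ)) = _
    rw [finrank_indB hv (j : ℕ) (by omega), D2_col hMcol]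
  · intro i j
    exact finrank_indA_inf_indB hv (i : ℕ) (j : ℕ) (by omega) (by omega)
  · exact isNilpotent_of_compat N hv hcard' hcA
  · intro i x hx
    have hx' : x ∈ indA (F := F) v ((i : ℕ) + 1) := by
      rw [show ((i : ℕ) + 1) = ((i.succ : Fin (k+1)) : ℕ) from (Fin.val_succ i).symm]
      exact hx
    have h := hcA i x hx'
    show N x ∈ indA (F := F) v ((i.castSucc : Fin (k+1)) : ℕ)
    rw [Fin.coe_castSucc]
    exact h
  · intro j x hx
    have hx' : x ∈ indB (F := F) v ((j : ℕ) + 1) := by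
      rw [show ((j : ℕ) + 1) = ((j.succ : Fin (l+1)) : ℕ) from (Fin.val_succ j).symm]
      exact hx
    have h := hcB j x hx'
    show N x ∈ indB (F := F) v ((j.castSucc : Fin (l+1)) : ℕ)
    rw [Fin.coe_castSucc]
    exact h

noncomputable def fiber_equiv (hMrow : ∀ i, ∑ j ∈ Finset.range l, M i j = α i)
    (hαsum : ∑ i ∈ Finset.range k, α i = n)
    (hMcol : ∀ j, ∑ i ∈ Finset.range k, M i j = β j)
    (t : Tset F n k l α β M) :
    {x : Xset F (Fin n → F) k l M // toTriple hMrow hαsum hMcol x = t}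
      ≃ {v : Idx k l M → (Fin n → F) // LocP t.1.1 t.1.2.1 v} := by
  classical
  obtain ⟨⟨FF, GG, N⟩, hm1, hb1, ht1, hr1, hm2, hb2, ht2, hr2, hpos, hnil, hc1, hc2⟩ := t
  have hrA' : ∀ i : Fin (k+1), finrank F (FF i) = D2 M (i : ℕ) l := by
    intro i; rw [hr1 i, D2_row hMrow]
  have hrB' : ∀ j : Fin (l+1), finrank F (GG j) = D2 M k (j : ℕ) := by
    intro j; rw [hr2 j, D2_col hMcol]
  refine
  { toFun := fun x => ⟨x.1.1.1, ?_⟩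
    invFun := fun v => ⟨⟨⟨v.1, N⟩, ?_, ?_, ?_⟩, ?_⟩
    left_inv := ?_
    right_inv := ?_ }
  · -- LocP from the fiber condition
    have hx := x.2
    have hxv : (toTriple (α := α) (β := β) hMrow hαsum hMcol x.1).1
        = (FF, GG, N) := congrArg Subtype.val hx
    have hFFeq : (fun i : Fin (k+1) => indA (F := F) x.1.1.1 (i : ℕ)) = FF :=
      congrArg Prod.fst hxv
    have hGGeq : (fun j : Fin (l+1) => indB (F := F) x.1.1.1 (j : ℕ)) = GG :=
      congrArg (fun z => z.2.1) hxv
    exact loc_of_fib x.1.2.1 (fun i => congrFun hFFeq i) (fun j => congrFun hGGeq j)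
  · -- linear independence
    exact loc_linearIndependent hm1 hm2 v.2
  · -- compat A
    have hfl := fib_of_loc hm1 hm2 hrA' hrB' v.2
    intro i x hx
    have hA1 := hfl.1 i.succ
    have hA2 := hfl.1 i.castSucc
    rw [Fin.val_succ] at hA1
    rw [Fin.coe_castSucc] at hA2
    rw [hA2]
    exact hc1 i x (by rw [← hA1]; exact hx)
  · -- compat B
    have hfl := fib_of_loc hm1 hm2 hrA' hrB' v.2
    intro j x hx
    have hB1 := hfl.2 j.succ
    have hB2 := hfl.2 j.castSucc
    rw [Fin.val_succ] at hB1
    rw [Fin.coe_castSucc] at hB2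
    rw [hB2]
    exact hc2 j x (by rw [← hB1]; exact hx)
  · -- toTriple = t
    have hfl := fib_of_loc hm1 hm2 hrA' hrB' v.2
    apply Subtype.ext
    show (_, _, _) = (FF, GG, N)
    refine Prod.ext ?_ (Prod.ext ?_ rfl)
    · exact funext fun i => hfl.1 i
    · exact funext fun j => hfl.2 j
  · intro x
    apply Subtype.ext
    apply Subtype.ext
    refine Prod.ext rfl ?_
    show N = x.1.1.2
    have hxv : (toTriple (α := α) (β := β) hMrow hαsum hMcol x.1).1
        = (FF, GG, N) := congrArg Subtype.val x.2
    exact (congrArg (fun z => z.2.2) hxv).symm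
  · intro v
    apply Subtype.ext
    rfl

theorem card_main (hMrow : ∀ i, ∑ j ∈ Finset.range l, M i j = α i)
    (hαsum : ∑ i ∈ Finset.range k, α i = n)
    (hMcol : ∀ j, ∑ i ∈ Finset.range k, M i j = β j) :
    Nat.card (Tset F n k l α β M)
        * (∏ c : Fin k × Fin l, ∏ s ∈ Finset.range (M c.1 c.2),
          (Fintype.card F ^ D2 M ((c.1 : ℕ) + 1) ((c.2 : ℕ) + 1)
            - Fintype.card F ^ (Wn M (c.1 : ℕ) (c.2 : ℕ) + s)))
      = Nat.card (Xset F (Fin n → F) k l M) := by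
  classical
  haveI hLM : Finite ((Fin n → F) →ₗ[F] (Fin n → F)) :=
    Finite.of_injective _ DFunLike.coe_injective
  haveI : Finite (Xset F (Fin n → F) k l M) := by
    unfold Xset; infer_instance
  haveI : Finite (Tset F n k l α β M) := by
    unfold Tset; infer_instance
  letI : Fintype (Xset F (Fin n → F) k l M) := Fintype.ofFinite _
  letI : Fintype (Tset F n k l α β M) := Fintype.ofFinite _
  have hfib : ∀ t : Tset F n k l α β M,
      Nat.card {x : Xset F (Fin n → F) k l M // toTriple hMrow hαsum hMcol x = t}
        = ∏ c : Fin k × Fin l, ∏ s ∈ Finset.range (M c.1 c.2),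
          (Fintype.card F ^ D2 M ((c.1 : ℕ) + 1) ((c.2 : ℕ) + 1)
            - Fintype.card F ^ (Wn M (c.1 : ℕ) (c.2 : ℕ) + s)) := by
    intro t
    obtain ⟨hm1, hb1, ht1, hr1, hm2, hb2, ht2, hr2, hpos, hrest⟩ := t.2
    rw [Nat.card_congr (fiber_equiv hMrow hαsum hMcol t)]
    exact card_loc hm1 hm2 hpos
  have hsig : Nat.card (Xset F (Fin n → F) k l M)
      = ∑ t : Tset F n k l α β M,
          Nat.card {x : Xset F (Fin n → F) k l M // toTriple hMrow hαsum hMcol x = t} := by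
    rw [← Nat.card_congr (Equiv.sigmaFiberEquiv (toTriple (α := α) (β := β) hMrow hαsum hMcol))]
    rw [Nat.card_eq_fintype_card
      (α := Σ t : Tset F n k l α β M,
        {x : Xset F (Fin n → F) k l M // toTriple hMrow hαsum hMcol x = t}),
      Fintype.card_sigma]
    exact Finset.sum_congr rfl fun t _ => (Nat.card_eq_fintype_card).symm
  rw [hsig, Finset.sum_congr rfl fun t _ => hfib t, Finset.sum_const, Finset.card_univ,
    smul_eq_mul, Nat.card_eq_fintype_card (α := Tset F n k l α β M)]

end PartF4

section PartG1

theorem two_mul_choose_two (a : ℕ) : 2 * a.choose 2 + a = a * a := by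
  induction a with
  | zero => rfl
  | succ a ih =>
    have h : (a + 1).choose 2 = a.choose 1 + a.choose 2 := Nat.choose_succ_succ a 1
    rw [h, Nat.choose_one_right]
    nlinarith [ih]

theorem triangle_lemma (L : ℕ) (a : ℕ → ℕ) :
    2 * (∑ x ∈ Finset.range L, (∑ y ∈ Finset.range x, a y) * a x)
      + ∑ x ∈ Finset.range L, a x * a x
    = (∑ x ∈ Finset.range L, a x) * (∑ x ∈ Finset.range L, a x) := by
  induction L with
  | zero => simp
  | succ L ih =>
    rw [Finset.sum_range_succ (fun x => (∑ y ∈ Finset.range x, a y) * a x),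
      Finset.sum_range_succ (fun x => a x * a x), Finset.sum_range_succ a]
    nlinarith [ih]

variable {k l : ℕ} {M : ℕ → ℕ → ℕ}

theorem sum_cells (f : ℕ → ℕ → ℕ) :
    (∑ c : Fin k × Fin l, f (c.1 : ℕ) (c.2 : ℕ))
      = ∑ i ∈ Finset.range k, ∑ j ∈ Finset.range l, f i j := by
  rw [Fintype.sum_prod_type]
  refine Eq.trans (Finset.sum_congr rfl fun x _ =>
    Fin.sum_univ_eq_sum_range (fun j => f (x : ℕ) j) l) ?_
  exact Fin.sum_univ_eq_sum_range (fun i => ∑ j ∈ Finset.range l, f i j) k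

theorem prod_cells (f : ℕ → ℕ → ℚ) :
    (∏ c : Fin k × Fin l, f (c.1 : ℕ) (c.2 : ℕ))
      = ∏ i ∈ Finset.range k, ∏ j ∈ Finset.range l, f i j := by
  rw [Fintype.prod_prod_type]
  refine Eq.trans (Finset.prod_congr rfl fun x _ =>
    Fin.prod_univ_eq_prod_range (fun j => f (x : ℕ) j) l) ?_
  exact Fin.prod_univ_eq_prod_range (fun i => ∏ j ∈ Finset.range l, f i j) k

theorem exponent_identity {n : ℕ} {α β : ℕ → ℕ}
    (hMrow : ∀ i, ∑ j ∈ Finset.range l, M i j = α i)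
    (hαsum : ∑ i ∈ Finset.range k, α i = n)
    (hMcol : ∀ j, ∑ i ∈ Finset.range k, M i j = β j)
    (hβsum : ∑ j ∈ Finset.range l, β j = n) :
    (∑ c : Fin k × Fin l, D2 M ((c.1 : ℕ) + 1) ((c.2 : ℕ) + 1) * M (c.1 : ℕ) (c.2 : ℕ))
      = (∑ c : Fin k × Fin l, D2 M (c.1 : ℕ) (c.2 : ℕ) * M (c.1 : ℕ) (c.2 : ℕ)) + n
        + (∑ i ∈ Finset.range k, (α i).choose 2)
        + (∑ j ∈ Finset.range l, (β j).choose 2) := by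
  rw [sum_cells (fun i j => D2 M (i + 1) (j + 1) * M i j),
    sum_cells (fun i j => D2 M i j * M i j)]
  have hcell : ∀ i j, D2 M (i + 1) (j + 1) * M i j
      = D2 M i j * M i j + (∑ i' ∈ Finset.range i, M i' j) * M i j
        + (∑ j' ∈ Finset.range j, M i j') * M i j + M i j * M i j := by
    intro i j
    rw [← Wn_add M i j]
    unfold Wn
    ring
  rw [Finset.sum_congr rfl fun i _ => Finset.sum_congr rfl fun j _ => hcell i j]
  simp only [Finset.sum_add_distrib]
  -- names for the pieces
  set D := ∑ i ∈ Finset.range k, ∑ j ∈ Finset.range l, D2 M i j * M i j with hD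
  set X1 := ∑ i ∈ Finset.range k, ∑ j ∈ Finset.range l,
      (∑ i' ∈ Finset.range i, M i' j) * M i j with hX1
  set X2 := ∑ i ∈ Finset.range k, ∑ j ∈ Finset.range l,
      (∑ j' ∈ Finset.range j, M i j') * M i j with hX2
  set S2 := ∑ i ∈ Finset.range k, ∑ j ∈ Finset.range l, M i j * M i j with hS2
  have hrow : 2 * X2 + S2 = ∑ i ∈ Finset.range k, α i * α i := by
    rw [hX2, hS2, Finset.mul_sum, ← Finset.sum_add_distrib]
    refine Finset.sum_congr rfl fun i _ => ?_
    have := triangle_lemma l (fun j => M i j)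
    rw [hMrow i] at this
    exact this
  have hcol : 2 * X1 + S2 = ∑ j ∈ Finset.range l, β j * β j := by
    rw [hX1, hS2, Finset.sum_comm (f := fun i j => (∑ i' ∈ Finset.range i, M i' j) * M i j),
      Finset.sum_comm (f := fun i j => M i j * M i j), Finset.mul_sum,
      ← Finset.sum_add_distrib]
    refine Finset.sum_congr rfl fun j _ => ?_
    have := triangle_lemma k (fun i => M i j)
    rw [hMcol j] at this
    exact this
  have hchα : 2 * (∑ i ∈ Finset.range k, (α i).choose 2) + n
      = ∑ i ∈ Finset.range k, α i * α i := by
    rw [Finset.mul_sum, ← hαsum, ← Finset.sum_add_distrib]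
    exact Finset.sum_congr rfl fun i _ => two_mul_choose_two (α i)
  have hchβ : 2 * (∑ j ∈ Finset.range l, (β j).choose 2) + n
      = ∑ j ∈ Finset.range l, β j * β j := by
    rw [Finset.mul_sum, ← hβsum, ← Finset.sum_add_distrib]
    exact Finset.sum_congr rfl fun j _ => two_mul_choose_two (β j)
  linarith

end PartG1

section PartG2

theorem geom_fac (t : ℚ) (m : ℕ) :
    qFac t m * (1 - t) ^ m = ∏ j ∈ Finset.range m, (1 - t ^ (j + 1)) := by
  rw [qFac, show (1 - t) ^ m = ∏ _j ∈ Finset.range m, (1 - t) from by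
    rw [Finset.prod_const, Finset.card_range], ← Finset.prod_mul_distrib]
  refine Finset.prod_congr rfl fun j _ => ?_
  have h := geom_sum_mul t (j + 1)
  linear_combination (-1 : ℚ) * h

theorem qFac_pos {t : ℚ} (ht : 0 < t) (m : ℕ) : 0 < qFac t m := by
  rw [qFac]
  refine Finset.prod_pos fun j _ => ?_
  refine Finset.sum_pos (fun i _ => pow_pos ht i) ⟨0, by simp⟩

theorem qprod_eq (q : ℕ) (hq : 1 < q) (E W m : ℕ) (hWE : W + m = E) :
    ((∏ s ∈ Finset.range m, (q ^ E - q ^ (W + s)) : ℕ) : ℚ)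
      = ((q : ℚ) ^ E) ^ m * qFac (q : ℚ)⁻¹ m * (1 - (q : ℚ)⁻¹) ^ m := by
  have hu : (q : ℚ) ≠ 0 := Nat.cast_ne_zero.mpr (by omega)
  rw [Nat.cast_prod]
  have hfac : ∀ s ∈ Finset.range m, ((q ^ E - q ^ (W + s) : ℕ) : ℚ)
      = (q : ℚ) ^ E * (1 - ((q : ℚ)⁻¹) ^ (m - s)) := by
    intro s hs
    have hsm : s < m := Finset.mem_range.mp hs
    have hle : q ^ (W + s) ≤ q ^ E := Nat.pow_le_pow_right (by omega) (by omega)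
    rw [Nat.cast_sub hle]
    push_cast
    rw [mul_sub, mul_one]
    congr 1
    rw [inv_pow]
    have hpe : (q : ℚ) ^ (W + s) * (q : ℚ) ^ (m - s) = (q : ℚ) ^ E := by
      rw [← pow_add]
      congr 1
      omega
    rw [← hpe, mul_inv_cancel_right₀ (pow_ne_zero _ hu)]
  rw [Finset.prod_congr rfl hfac, Finset.prod_mul_distrib, Finset.prod_const, Finset.card_range]
  have hrefl : (∏ s ∈ Finset.range m, (1 - ((q : ℚ)⁻¹) ^ (m - s)))
      = ∏ j ∈ Finset.range m, (1 - ((q : ℚ)⁻¹) ^ (j + 1)) := by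
    refine Eq.trans (Finset.prod_congr rfl fun s hs => ?_)
      (Finset.prod_range_reflect (fun j => 1 - ((q : ℚ)⁻¹) ^ (j + 1)) m)
    have hsm : s < m := Finset.mem_range.mp hs
    have : m - s = (m - 1 - s) + 1 := by omega
    rw [this]
  rw [hrefl, ← geom_fac]
  ring

end PartG2

section PartH

theorem card_Tset_eq (F : Type*) [Field F] [Fintype F] (n k l : ℕ) (α β : ℕ → ℕ)
    (hαsum : ∑ i ∈ Finset.range k, α i = n)
    (hβsum : ∑ j ∈ Finset.range l, β j = n)
    (M : ℕ → ℕ → ℕ)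
    (hMrow : ∀ i, ∑ j ∈ Finset.range l, M i j = α i)
    (hMcol : ∀ j, ∑ i ∈ Finset.range k, M i j = β j) :
    (Nat.card (Tset F n k l α β M) : ℚ)
      = ((Fintype.card F : ℚ)⁻¹)
          ^ (-(n : ℤ) ^ 2 + n
              + (∑ i ∈ Finset.range k, Nat.choose (α i) 2 : ℕ)
              + (∑ j ∈ Finset.range l, Nat.choose (β j) 2 : ℕ))
        * qFac (Fintype.card F : ℚ)⁻¹ n
        / ∏ i ∈ Finset.range k, ∏ j ∈ Finset.range l,
            qFac (Fintype.card F : ℚ)⁻¹ (M i j) := by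
  classical
  set q : ℕ := Fintype.card F with hqdef
  have hq : 1 < q := Fintype.one_lt_card
  set u : ℚ := (q : ℚ) with hudef
  have hu0 : u ≠ 0 := by
    rw [hudef]; exact Nat.cast_ne_zero.mpr (by omega)
  have ht0 : (0 : ℚ) < u⁻¹ := by
    rw [hudef]
    refine inv_pos.mpr ?_
    exact_mod_cast Nat.lt_of_lt_of_le Nat.zero_lt_one hq.le
  have htlt : u⁻¹ < 1 := by
    rw [hudef, inv_lt_one_iff₀]
    right
    exact_mod_cast hq
  have hfr : finrank F (Fin n → F) = n := by
    rw [Module.finrank_fintype_fun_eq_card, Fintype.card_fin]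
  -- counting equation over ℕ
  have hcount := card_main (F := F) (n := n) hMrow hαsum hMcol
  have hX := card_Xset (F := F) (V := Fin n → F) (k := k) (l := l) (M := M)
    (fun c => ⟨le_of_lt c.1.isLt, le_of_lt c.2.isLt⟩) (hcardIdx hMrow hαsum)
  rw [hfr] at hX
  rw [hX] at hcount
  -- cast to ℚ
  have hcountQ : (Nat.card (Tset F n k l α β M) : ℚ)
      * ((∏ c : Fin k × Fin l, ∏ s ∈ Finset.range (M c.1 c.2),
          (q ^ D2 M ((c.1 : ℕ) + 1) ((c.2 : ℕ) + 1)
            - q ^ (Wn M (c.1 : ℕ) (c.2 : ℕ) + s)) : ℕ) : ℚ)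
      = ((∏ s ∈ Finset.range n, (q ^ n - q ^ s) : ℕ) : ℚ)
        * ((∏ c : Fin k × Fin l, (q ^ D2 M (c.1 : ℕ) (c.2 : ℕ)) ^ M c.1 c.2 : ℕ) : ℚ) := by
    exact_mod_cast congrArg (Nat.cast (R := ℚ)) hcount
  -- compute each cast
  have hA : ((∏ s ∈ Finset.range n, (q ^ n - q ^ s) : ℕ) : ℚ)
      = (u ^ n) ^ n * qFac u⁻¹ n * (1 - u⁻¹) ^ n := by
    rw [show (∏ s ∈ Finset.range n, (q ^ n - q ^ s)) =
      ∏ s ∈ Finset.range n, (q ^ n - q ^ (0 + s)) from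
      Finset.prod_congr rfl fun s _ => by rw [Nat.zero_add]]
    exact qprod_eq q hq n 0 n (by omega)
  have hcP : ((∏ c : Fin k × Fin l, ∏ s ∈ Finset.range (M c.1 c.2),
        (q ^ D2 M ((c.1 : ℕ) + 1) ((c.2 : ℕ) + 1)
          - q ^ (Wn M (c.1 : ℕ) (c.2 : ℕ) + s)) : ℕ) : ℚ)
      = ∏ c : Fin k × Fin l,
          ((u ^ D2 M ((c.1 : ℕ) + 1) ((c.2 : ℕ) + 1)) ^ M c.1 c.2
            * qFac u⁻¹ (M c.1 c.2) * (1 - u⁻¹) ^ M c.1 c.2) := by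
    rw [Nat.cast_prod]
    exact Finset.prod_congr rfl fun c _ =>
      qprod_eq q hq _ _ _ (Wn_add M (c.1 : ℕ) (c.2 : ℕ))
  have hB : ((∏ c : Fin k × Fin l, (q ^ D2 M (c.1 : ℕ) (c.2 : ℕ)) ^ M c.1 c.2 : ℕ) : ℚ)
      = ∏ c : Fin k × Fin l, (u ^ D2 M (c.1 : ℕ) (c.2 : ℕ)) ^ M c.1 c.2 := by
    push_cast
    rfl
  rw [hcP, hA, hB] at hcountQ
  -- exponent sums
  set SE := ∑ c : Fin k × Fin l, D2 M ((c.1 : ℕ) + 1) ((c.2 : ℕ) + 1) * M c.1 c.2 with hSE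
  set SD := ∑ c : Fin k × Fin l, D2 M (c.1 : ℕ) (c.2 : ℕ) * M c.1 c.2 with hSD
  have hsumM : (∑ c : Fin k × Fin l, M c.1 c.2) = n := by
    rw [sum_cells (k := k) (l := l) (fun i j => M i j),
      Finset.sum_congr rfl fun i _ => hMrow i, hαsum]
  have hprodEM : (∏ c : Fin k × Fin l,
      (u ^ D2 M ((c.1 : ℕ) + 1) ((c.2 : ℕ) + 1)) ^ M c.1 c.2) = u ^ SE := by
    rw [Finset.prod_congr rfl fun c (_ : c ∈ Finset.univ) =>
      (pow_mul u (D2 M ((c.1 : ℕ) + 1) ((c.2 : ℕ) + 1)) (M c.1 c.2)).symm]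
    rw [Finset.prod_pow_eq_pow_sum]
  have hprodDM : (∏ c : Fin k × Fin l,
      (u ^ D2 M (c.1 : ℕ) (c.2 : ℕ)) ^ M c.1 c.2) = u ^ SD := by
    rw [Finset.prod_congr rfl fun c (_ : c ∈ Finset.univ) =>
      (pow_mul u (D2 M (c.1 : ℕ) (c.2 : ℕ)) (M c.1 c.2)).symm]
    rw [Finset.prod_pow_eq_pow_sum]
  have hprod1t : (∏ c : Fin k × Fin l, (1 - u⁻¹) ^ M c.1 c.2) = (1 - u⁻¹) ^ n := by
    rw [Finset.prod_pow_eq_pow_sum, hsumM]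
  set Cα := (∑ i ∈ Finset.range k, Nat.choose (α i) 2) with hCα
  set Cβ := (∑ j ∈ Finset.range l, Nat.choose (β j) 2) with hCβ
  have hNID : SE = SD + n + Cα + Cβ := exponent_identity hMrow hαsum hMcol hβsum
  set z : ℤ := -(n : ℤ) ^ 2 + n + Cα + Cβ with hz
  have hRu : (u⁻¹) ^ z * u ^ SE = (u ^ n) ^ n * u ^ SD := by
    rw [inv_zpow, ← zpow_neg]
    rw [show u ^ SE = u ^ (SE : ℤ) from (zpow_natCast u SE).symm,
      show u ^ SD = u ^ (SD : ℤ) from (zpow_natCast u SD).symm,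
      show (u ^ n) ^ n = u ^ ((n * n : ℕ) : ℤ) from by rw [zpow_natCast, pow_mul]]
    rw [← zpow_add₀ hu0, ← zpow_add₀ hu0]
    congr 1
    have hcast : (SE : ℤ) = (SD : ℤ) + (n : ℤ) + (Cα : ℤ) + (Cβ : ℤ) := by
      exact_mod_cast hNID
    rw [hz, sq]
    push_cast
    linarith
  -- the q-factorial denominator
  set P := ∏ i ∈ Finset.range k, ∏ j ∈ Finset.range l, qFac u⁻¹ (M i j) with hP
  have hPc : (∏ c : Fin k × Fin l, qFac u⁻¹ (M c.1 c.2)) = P := by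
    rw [hP]
    exact prod_cells (k := k) (l := l) (fun i j => qFac u⁻¹ (M i j))
  have hPne : P ≠ 0 := by
    rw [hP]
    refine Finset.prod_ne_zero_iff.mpr fun i _ => ?_
    refine Finset.prod_ne_zero_iff.mpr fun j _ => ?_
    exact ne_of_gt (qFac_pos ht0 _)
  have hcPsplit : (∏ c : Fin k × Fin l,
      ((u ^ D2 M ((c.1 : ℕ) + 1) ((c.2 : ℕ) + 1)) ^ M c.1 c.2
        * qFac u⁻¹ (M c.1 c.2) * (1 - u⁻¹) ^ M c.1 c.2))
      = u ^ SE * P * (1 - u⁻¹) ^ n := by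
    rw [Finset.prod_mul_distrib, Finset.prod_mul_distrib, hprodEM, hprod1t, hPc]
  rw [hcPsplit, hprodDM] at hcountQ
  -- the key identity for the target value
  have hkey : (u⁻¹) ^ z * qFac u⁻¹ n / P * (u ^ SE * P * (1 - u⁻¹) ^ n)
      = (u ^ n) ^ n * qFac u⁻¹ n * (1 - u⁻¹) ^ n * u ^ SD := by
    rw [div_mul_eq_mul_div, div_eq_iff hPne]
    linear_combination (qFac u⁻¹ n * (1 - u⁻¹) ^ n * P) * hRu
  exact mul_right_cancel₀ (by
      rw [← hcPsplit]
      refine Finset.prod_ne_zero_iff.mpr fun c _ => ?_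
      refine mul_ne_zero (mul_ne_zero (pow_ne_zero _ (pow_ne_zero _ hu0))
        (ne_of_gt (qFac_pos ht0 _))) (pow_ne_zero _ (ne_of_gt (by linarith))))
    (hcountQ.trans hkey.symm)

end PartH

end Stmt19Aux

/-- Let `α, β` be weak compositions of `n` with `k, l` parts and `M` a `k × l`
nonnegative-integer matrix with row sums `α` and column sums `β`.  Over `F_q` with
`t = 1/q`, the number of triples `(F, F', N)` — `F` a partial flag of type `α`, `F'` a
partial flag of type `β`, `(F, F')` of relative position `M` (i.e.
`dim(F_i ∩ F'_j) = ∑_{i'≤i, j'≤j} M_{i',j'}`), and `N` a nilpotent endomorphism strictly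
compatible with both — equals
`t^{−n² + n + n(α) + n(β)} · [n]_t! / ∏_{i,j} [M_{i,j}]_t!`,
where `n(γ) = ∑_i C(γ_i, 2)`. -/
theorem stmt_19 (F : Type*) [Field F] [Fintype F] (n k l : ℕ) (α β : ℕ → ℕ)
    (hαsupp : ∀ i, k ≤ i → α i = 0) (hαsum : ∑ i ∈ Finset.range k, α i = n)
    (hβsupp : ∀ j, l ≤ j → β j = 0) (hβsum : ∑ j ∈ Finset.range l, β j = n)
    (M : ℕ → ℕ → ℕ) (hMsupp : ∀ i j, k ≤ i ∨ l ≤ j → M i j = 0)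
    (hMrow : ∀ i, ∑ j ∈ Finset.range l, M i j = α i)
    (hMcol : ∀ j, ∑ i ∈ Finset.range k, M i j = β j) :
    (Nat.card {FFN : (Fin (k + 1) → Submodule F (Fin n → F))
        × (Fin (l + 1) → Submodule F (Fin n → F))
        × ((Fin n → F) →ₗ[F] (Fin n → F)) //
        Monotone FFN.1 ∧ FFN.1 0 = ⊥ ∧ FFN.1 (Fin.last k) = ⊤ ∧
        (∀ i : Fin (k + 1),
          Module.finrank F (FFN.1 i) = ∑ s ∈ Finset.range (i : ℕ), α s) ∧
        Monotone FFN.2.1 ∧ FFN.2.1 0 = ⊥ ∧ FFN.2.1 (Fin.last l) = ⊤ ∧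
        (∀ j : Fin (l + 1),
          Module.finrank F (FFN.2.1 j) = ∑ s ∈ Finset.range (j : ℕ), β s) ∧
        (∀ (i : Fin (k + 1)) (j : Fin (l + 1)),
          Module.finrank F ((FFN.1 i ⊓ FFN.2.1 j : Submodule F (Fin n → F)))
            = ∑ i' ∈ Finset.range (i : ℕ), ∑ j' ∈ Finset.range (j : ℕ), M i' j') ∧
        IsNilpotent FFN.2.2 ∧
        (∀ i : Fin k, ∀ x ∈ FFN.1 i.succ, FFN.2.2 x ∈ FFN.1 i.castSucc) ∧
        (∀ j : Fin l, ∀ x ∈ FFN.2.1 j.succ, FFN.2.2 x ∈ FFN.2.1 j.castSucc)} : ℚ)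
      = ((Fintype.card F : ℚ)⁻¹)
          ^ (-(n : ℤ) ^ 2 + n
              + (∑ i ∈ Finset.range k, Nat.choose (α i) 2 : ℕ)
              + (∑ j ∈ Finset.range l, Nat.choose (β j) 2 : ℕ))
        * qFac (Fintype.card F : ℚ)⁻¹ n
        / ∏ i ∈ Finset.range k, ∏ j ∈ Finset.range l,
            qFac (Fintype.card F : ℚ)⁻¹ (M i j) := by
  exact Stmt19Aux.card_Tset_eq F n k l α β hαsum hβsum M hMrow hMcol
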